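/- For the A_{n−1}^(1) setup with λ ∈ (P_cl^+)_{l−m} and μ ∈ (P_cl^+)_m, the sequence p^{(λ,μ)}(j) = (λ_{i+j} + μ_{i+2j}) ⊗ (μ_{i+2j−1}) in B^{1,l}⊗B^{1,m} is a reference path: every p^{(λ,μ)}(j) is minimal and φ(p^{(λ,μ)}(j+1)) = ε(p^{(λ,μ)}(j)) = σ^j λ + σ^{2j} μ, where σ is the weight lattice automorphism σΛ_i = Λ_{i−1}. -/

import Mathlib

open Fin.NatCast

/-- The reference path `p^{(λ,μ)}(j) = (λ_{i+j} + μ_{i+2j}) ⊗ (μ_{i+2j−1})`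
in `B^{1,l}⊗B^{1,m}` for `A_{n−1}^{(1)}` (indices mod `n`). -/
def prefA (n : ℕ) [NeZero n] (lam mu : Fin n → ℕ) (j : ℕ) :
    (Fin n → ℕ) × (Fin n → ℕ) :=
  (fun i => lam (i + (j : Fin n)) + mu (i + ((2 * j : ℕ) : Fin n)),
   fun i => mu (i + ((2 * j : ℕ) : Fin n) - 1))

lemma sum_shift {n : ℕ} [NeZero n] (f : Fin n → ℕ) (c : Fin n) :
    ∑ i, f (i + c) = ∑ i, f i :=
  Fintype.sum_equiv (Equiv.addRight c) _ _ (fun _ => rfl)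

/-- for `λ ∈ (P_cl^+)_{l−m}` and `μ ∈ (P_cl^+)_m`, the sequence
`p^{(λ,μ)}` is a reference path in `B = B^{1,l}⊗B^{1,m}`: each `p^{(λ,μ)}(j)`
lies in `B` and is minimal, and
`φ(p^{(λ,μ)}(j+1)) = ε(p^{(λ,μ)}(j)) = σ^j λ + σ^{2j} μ`, i.e. componentwise
`λ_{i+j} + μ_{i+2j}` (the automorphism `σΛ_i = Λ_{i−1}` shifts indices).
Tensor product `ε_i(b1⊗b2) = max(ε_i(b1), ε_i(b1)+ε_i(b2)−φ_i(b1))` and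
`φ_i(b1⊗b2) = max(φ_i(b2), φ_i(b1)+φ_i(b2)−ε_i(b2))`, with
`ε_i((a)) = a_i`, `φ_i((a)) = a_{i−1}`. -/
theorem stmt17 (n l m : ℕ) [NeZero n] (hlm : m ≤ l)
    (lam mu : Fin n → ℕ)
    (hlam : (∑ i, lam i) = l - m) (hmu : (∑ i, mu i) = m) :
    ∀ (j : ℕ),
      -- p^{(λ,μ)}(j) ∈ B^{1,l}⊗B^{1,m}
      ((∑ i, (prefA n lam mu j).1 i) = l ∧ (∑ i, (prefA n lam mu j).2 i) = m) ∧
      ∀ (i : Fin n),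
        -- minimality: φ_i of the left factor ≥ ε_i of the right factor
        ((prefA n lam mu j).2 i ≤ (prefA n lam mu j).1 (i - 1)) ∧
        -- ε_i(p^{(λ,μ)}(j)) = (σ^j λ + σ^{2j} μ)_i
        (max ((prefA n lam mu j).1 i)
            ((prefA n lam mu j).1 i + (prefA n lam mu j).2 i
              - (prefA n lam mu j).1 (i - 1))
          = lam (i + (j : Fin n)) + mu (i + ((2 * j : ℕ) : Fin n))) ∧
        -- φ_i(p^{(λ,μ)}(j+1)) = (σ^j λ + σ^{2j} μ)_i
        (max ((prefA n lam mu (j + 1)).2 (i - 1))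
            ((prefA n lam mu (j + 1)).1 (i - 1) + (prefA n lam mu (j + 1)).2 (i - 1)
              - (prefA n lam mu (j + 1)).2 i)
          = lam (i + (j : Fin n)) + mu (i + ((2 * j : ℕ) : Fin n))) := by
  intro j
  have hcast1 : ((j + 1 : ℕ) : Fin n) = (j : Fin n) + 1 := by push_cast; rfl
  have hcast2 : ((2 * (j + 1) : ℕ) : Fin n) = ((2 * j : ℕ) : Fin n) + 2 := by
    rw [show 2 * (j + 1) = 2 * j + 2 by ring, Nat.cast_add]; rfl
  refine ⟨⟨?_, ?_⟩, ?_⟩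
  · simp only [prefA, Finset.sum_add_distrib, sum_shift, hlam, hmu]
    omega
  · simp only [prefA]
    rw [sum_shift (fun i => mu (i - 1)) ((2 * j : ℕ) : Fin n),
      show (∑ i, mu (i - 1)) = ∑ i, mu i from
        Fintype.sum_equiv (Equiv.subRight 1) _ _ fun _ => rfl, hmu]
  · intro i
    simp only [prefA, hcast1, hcast2]
    generalize (j : Fin n) = cj
    generalize ((2 * j : ℕ) : Fin n) = c2
    have e1 : i + c2 - 1 = i - 1 + c2 := by open Fin.CommRing in ring
    have e2 : i - 1 + (cj + 1) = i + cj := by open Fin.CommRing in ring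
    have e3 : i - 1 + (c2 + 2) = i + c2 + 1 := by open Fin.CommRing in ring
    have e4 : i - 1 + (c2 + 2) - 1 = i + c2 := by open Fin.CommRing in ring
    have e5 : i + (c2 + 2) - 1 = i + c2 + 1 := by open Fin.CommRing in ring
    rw [e1, e4, e5, e3, e2]
    refine ⟨Nat.le_add_left _ _, ?_, ?_⟩ <;> omega
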